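/- Let n ≥ 1 and 0 < r < R. For i = 0, 1, …, n−1 let θ_i = iπ/n, and let ρ_i, σ_i ∈ {r, R}. Define points w_i = ρ_i·(cos θ_i, sin θ_i) and u_i = −σ_i·(cos θ_i, sin θ_i) in ℝ², and let H be any finite subset of the closed disc of radius r centered at the origin. Then the maximum Euclidean distance between two points of the set {w_0,…,w_{n−1}} ∪ {u_0,…,u_{n−1}} ∪ H equals 2R if and only if there exists an index i with ρ_i = R and σ_i = R. -/

import Mathlib

set_option maxHeartbeats 1000000

open Real

/-- The point of the Euclidean plane with coordinates `(a, b)`. -/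
noncomputable def pt (a b : ℝ) : EuclideanSpace ℝ (Fin 2) :=
  (WithLp.equiv 2 (Fin 2 → ℝ)).symm ![a, b]

lemma norm_pt_cos_sin (x : ℝ) : ‖pt (Real.cos x) (Real.sin x)‖ = 1 := by
  rw [EuclideanSpace.norm_eq]
  simp [Fin.sum_univ_two, pt, sq_abs]

theorem diameter_reduction
    (n : ℕ) (hn : 1 ≤ n) (r R : ℝ) (hr : 0 < r) (hrR : r < R)
    (ρ σ : Fin n → ℝ)
    (hρ : ∀ i, ρ i = r ∨ ρ i = R) (hσ : ∀ i, σ i = r ∨ σ i = R)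
    (w u : Fin n → EuclideanSpace ℝ (Fin 2))
    (hw : ∀ i : Fin n, w i = ρ i • pt (Real.cos ((i : ℝ) * Real.pi / n))
      (Real.sin ((i : ℝ) * Real.pi / n)))
    (hu : ∀ i : Fin n, u i = -(σ i) • pt (Real.cos ((i : ℝ) * Real.pi / n))
      (Real.sin ((i : ℝ) * Real.pi / n)))
    (H : Finset (EuclideanSpace ℝ (Fin 2)))
    (hH : (H : Set (EuclideanSpace ℝ (Fin 2))) ⊆ Metric.closedBall 0 r)
    (S : Set (EuclideanSpace ℝ (Fin 2)))
    (hS : S = Set.range w ∪ Set.range u ∪ (H : Set (EuclideanSpace ℝ (Fin 2)))) :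
    IsGreatest {d : ℝ | ∃ p ∈ S, ∃ q ∈ S, d = dist p q} (2 * R) ↔
      ∃ i, ρ i = R ∧ σ i = R := by
  set θ : Fin n → ℝ := fun i => (i : ℝ) * Real.pi / n with hθdef
  have hn0 : (0:ℝ) < n := by exact_mod_cast hn
  have hθ0 : ∀ i, 0 ≤ θ i := fun i => by
    apply div_nonneg (mul_nonneg (Nat.cast_nonneg _) Real.pi_pos.le) hn0.le
  have hθπ : ∀ i, θ i < Real.pi := fun i => by
    rw [hθdef, div_lt_iff₀ hn0]
    have : (i : ℝ) < n := by exact_mod_cast i.2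
    nlinarith [Real.pi_pos]
  have hθinj : ∀ i j : Fin n, θ i = θ j → i = j := by
    intro i j h
    have hπn : Real.pi / n ≠ 0 := by positivity
    have : (i : ℝ) = j := by
      have h' : (i:ℝ) * Real.pi / n = j * Real.pi / n := h
      rw [div_left_inj' hn0.ne', mul_left_inj' Real.pi_ne_zero] at h'
      exact h'
    exact Fin.ext (by exact_mod_cast this)
  have hρpos : ∀ i, 0 < ρ i := fun i => by rcases hρ i with h | h <;> rw [h] <;> linarith
  have hσpos : ∀ i, 0 < σ i := fun i => by rcases hσ i with h | h <;> rw [h] <;> linarith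
  have hρle : ∀ i, ρ i ≤ R := fun i => by rcases hρ i with h | h <;> rw [h] <;> linarith
  have hσle : ∀ i, σ i ≤ R := fun i => by rcases hσ i with h | h <;> rw [h] <;> linarith
  have hnw : ∀ i, ‖w i‖ = ρ i := fun i => by
    rw [hw i, norm_smul, norm_pt_cos_sin, mul_one, Real.norm_eq_abs,
      abs_of_pos (hρpos i)]
  have hnu : ∀ i, ‖u i‖ = σ i := fun i => by
    rw [hu i, norm_smul, norm_pt_cos_sin, mul_one, norm_neg, Real.norm_eq_abs,
      abs_of_pos (hσpos i)]
  have hbound : ∀ p ∈ S, ‖p‖ ≤ R := by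
    intro p hp
    rw [hS] at hp
    rcases hp with (⟨i, rfl⟩ | ⟨i, rfl⟩) | hp
    · rw [hnw]; exact hρle i
    · rw [hnu]; exact hσle i
    · have := hH hp
      rw [Metric.mem_closedBall, dist_zero_right] at this
      linarith
  constructor
  · rintro ⟨⟨p, hp, q, hq, hd⟩, -⟩
    -- equality forces q = -p and ‖p‖ = R
    have hpR := hbound p hp
    have hqR := hbound q hq
    have hpq : ‖p - q‖ = 2 * R := by rw [← dist_eq_norm, ← hd]
    have hsum : ‖p + q‖ = 0 := by
      have hpar := parallelogram_law_with_norm ℝ p q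
      have h1 : ‖p + q‖ * ‖p + q‖ ≤ 0 := by nlinarith [norm_nonneg p, norm_nonneg q]
      nlinarith [norm_nonneg (p + q)]
    have hqneg : q = -p := by
      have := norm_eq_zero.mp hsum
      have : p + q = 0 := this
      linear_combination (norm := module) this
    have hpnorm : ‖p‖ = R := by
      rw [hqneg] at hpq
      have : ‖p - -p‖ = ‖(2:ℝ) • p‖ := by norm_num [two_smul]
      rw [this, norm_smul] at hpq
      simp at hpq
      linarith
    have hqnorm : ‖q‖ = R := by rw [hqneg, norm_neg]; exact hpnorm
    have hRne : R ≠ 0 := by linarith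
    -- p, q ∉ H
    rw [hS] at hp hq
    have hnotH : ∀ x : EuclideanSpace ℝ (Fin 2), ‖x‖ = R → x ∉ (H : Set _) := by
      intro x hx hxH
      have := hH hxH
      rw [Metric.mem_closedBall, dist_zero_right] at this
      linarith [hx ▸ this]
    rcases hp with (⟨i, rfl⟩ | ⟨i, rfl⟩) | hp
    rotate_right
    · exact absurd hp (hnotH _ hpnorm)
    -- p = w i
    · have hρiR : ρ i = R := by rw [← hnw i]; exact hpnorm
      rcases hq with (⟨j, rfl⟩ | ⟨j, rfl⟩) | hq
      rotate_right
      · exact absurd hq (hnotH _ hqnorm)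
      · -- q = w j : contradiction
        exfalso
        have hρjR : ρ j = R := by rw [← hnw j]; exact hqnorm
        have h1 : R * Real.sin (θ j) = -(R * Real.sin (θ i)) := by
          have := congrArg (fun f : EuclideanSpace ℝ (Fin 2) => f 1) hqneg
          simpa [hw, hρiR, hρjR, pt] using this
        have hsi := Real.sin_nonneg_of_nonneg_of_le_pi (hθ0 i) (hθπ i).le
        have hsj := Real.sin_nonneg_of_nonneg_of_le_pi (hθ0 j) (hθπ j).le
        have hsi0 : Real.sin (θ i) = 0 := by nlinarith
        have hi0 : θ i = 0 := by
          by_contra h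
          have : 0 < θ i := lt_of_le_of_ne (hθ0 i) (Ne.symm h)
          exact absurd hsi0 (ne_of_gt (Real.sin_pos_of_pos_of_lt_pi this (hθπ i)))
        have hsj0 : Real.sin (θ j) = 0 := by nlinarith
        have hj0 : θ j = 0 := by
          by_contra h
          have : 0 < θ j := lt_of_le_of_ne (hθ0 j) (Ne.symm h)
          exact absurd hsj0 (ne_of_gt (Real.sin_pos_of_pos_of_lt_pi this (hθπ j)))
        have h0 : R * Real.cos (θ j) = -(R * Real.cos (θ i)) := by
          have := congrArg (fun f : EuclideanSpace ℝ (Fin 2) => f 0) hqneg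
          simpa [hw, hρiR, hρjR, pt] using this
        rw [hi0, hj0, Real.cos_zero] at h0
        nlinarith
      · -- q = u j
        have hσjR : σ j = R := by rw [← hnu j]; exact hqnorm
        have h0 : -(R * Real.cos (θ j)) = -(R * Real.cos (θ i)) := by
          have := congrArg (fun f : EuclideanSpace ℝ (Fin 2) => f 0) hqneg
          simpa [hw, hu, hρiR, hσjR, pt] using this
        have hcos : Real.cos (θ j) = Real.cos (θ i) := by
          exact mul_left_cancel₀ hRne (neg_injective h0)
        have hij : i = j := hθinj i j
          (Real.injOn_cos ⟨hθ0 i, (hθπ i).le⟩ ⟨hθ0 j, (hθπ j).le⟩ hcos.symm)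
        exact ⟨i, hρiR, hij ▸ hσjR⟩
    -- p = u i
    · have hσiR : σ i = R := by rw [← hnu i]; exact hpnorm
      rcases hq with (⟨j, rfl⟩ | ⟨j, rfl⟩) | hq
      rotate_right
      · exact absurd hq (hnotH _ hqnorm)
      · -- q = w j
        have hρjR : ρ j = R := by rw [← hnw j]; exact hqnorm
        have h0 : R * Real.cos (θ j) = -(-(R * Real.cos (θ i))) := by
          have := congrArg (fun f : EuclideanSpace ℝ (Fin 2) => f 0) hqneg
          simpa [hw, hu, hσiR, hρjR, pt] using this
        rw [neg_neg] at h0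
        have hcos : Real.cos (θ j) = Real.cos (θ i) := by
          exact mul_left_cancel₀ hRne h0
        have hij : i = j := hθinj i j
          (Real.injOn_cos ⟨hθ0 i, (hθπ i).le⟩ ⟨hθ0 j, (hθπ j).le⟩ hcos.symm)
        exact ⟨i, hij ▸ hρjR, hσiR⟩
      · -- q = u j : contradiction
        exfalso
        have hσjR : σ j = R := by rw [← hnu j]; exact hqnorm
        have h1 : -(R * Real.sin (θ j)) = -(-(R * Real.sin (θ i))) := by
          have := congrArg (fun f : EuclideanSpace ℝ (Fin 2) => f 1) hqneg
          simpa [hu, hσiR, hσjR, pt] using this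
        rw [neg_neg] at h1
        have hsi := Real.sin_nonneg_of_nonneg_of_le_pi (hθ0 i) (hθπ i).le
        have hsj := Real.sin_nonneg_of_nonneg_of_le_pi (hθ0 j) (hθπ j).le
        have hsi0 : Real.sin (θ i) = 0 := by nlinarith
        have hi0 : θ i = 0 := by
          by_contra h
          have : 0 < θ i := lt_of_le_of_ne (hθ0 i) (Ne.symm h)
          exact absurd hsi0 (ne_of_gt (Real.sin_pos_of_pos_of_lt_pi this (hθπ i)))
        have hsj0 : Real.sin (θ j) = 0 := by nlinarith
        have hj0 : θ j = 0 := by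
          by_contra h
          have : 0 < θ j := lt_of_le_of_ne (hθ0 j) (Ne.symm h)
          exact absurd hsj0 (ne_of_gt (Real.sin_pos_of_pos_of_lt_pi this (hθπ j)))
        have h0 : -(R * Real.cos (θ j)) = -(-(R * Real.cos (θ i))) := by
          have := congrArg (fun f : EuclideanSpace ℝ (Fin 2) => f 0) hqneg
          simpa [hu, hσiR, hσjR, pt] using this
        rw [hi0, hj0, Real.cos_zero] at h0
        nlinarith
  · rintro ⟨i, hρi, hσi⟩
    constructor
    · refine ⟨w i, ?_, u i, ?_, ?_⟩
      · rw [hS]; exact Or.inl (Or.inl ⟨i, rfl⟩)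
      · rw [hS]; exact Or.inl (Or.inr ⟨i, rfl⟩)
      · rw [dist_eq_norm, hw, hu, hρi, hσi]
        have : R • pt (Real.cos (θ i)) (Real.sin (θ i)) -
            -R • pt (Real.cos (θ i)) (Real.sin (θ i)) =
            (2 * R) • pt (Real.cos (θ i)) (Real.sin (θ i)) := by
          module
        rw [this, norm_smul, norm_pt_cos_sin, mul_one, Real.norm_eq_abs,
          abs_of_pos (by linarith)]
    · rintro d ⟨p, hp, q, hq, rfl⟩
      calc dist p q ≤ ‖p‖ + ‖q‖ := by rw [dist_eq_norm]; exact norm_sub_le p q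
        _ ≤ R + R := add_le_add (hbound p hp) (hbound q hq)
        _ = 2 * R := by ring
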